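/- arXiv:2501.15785 — 2 statements merged into one kernel-verified Lean document; each statement's English description precedes it below -/
import Mathlib

section
/- Let x₀¹,…,x₀ᴺ ∈ H (a real Hilbert space), let ω₁(y,s),…,ω_N(y,s) be nonnegative weights summing to 1, and let y : [s₀,∞) → H solve y'(s) = −(y(s) − Σₙ ωₙ(y(s),s) x₀ⁿ) with y(s₀) = x_T. Then for any fixed point z ∈ H and all s ≥ s₀: ‖y(s) − z‖ ≤ max{‖x_T − z‖, ‖x₀¹ − z‖, …, ‖x₀ᴺ − z‖}, and limsup as s → ∞ of ‖y(s) − z‖ ≤ max over n of ‖x₀ⁿ − z‖. -/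
open Real Set Filter

theorem stmt7 {H : Type*} [NormedAddCommGroup H] [InnerProductSpace ℝ H]
    [CompleteSpace H]
    {N : ℕ} (hN : 0 < N) (x0 : Fin N → H)
    (ω : Fin N → H → ℝ → ℝ)
    (hω0 : ∀ n y s, 0 ≤ ω n y s)
    (hω1 : ∀ y s, ∑ n, ω n y s = 1)
    (s0 : ℝ) (xT : H) (y : ℝ → H)
    (hy0 : y s0 = xT)
    (hode : ∀ s ≥ s0, HasDerivAt y (-(y s - ∑ n, ω n (y s) s • x0 n)) s)
    (z : H) :
    (∀ s ≥ s0, ‖y s - z‖ ≤ max ‖xT - z‖ (⨆ n, ‖x0 n - z‖)) ∧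
    Filter.limsup (fun s => ‖y s - z‖) Filter.atTop ≤ ⨆ n, ‖x0 n - z‖ := by
  haveI : Nonempty (Fin N) := ⟨⟨0, hN⟩⟩
  set M : ℝ := ⨆ n, ‖x0 n - z‖ with hMdef
  set A : ℝ := ‖xT - z‖ with hAdef
  have hbdd : BddAbove (Set.range fun n => ‖x0 n - z‖) :=
    (Set.finite_range _).bddAbove
  have hMn : ∀ n, ‖x0 n - z‖ ≤ M := fun n => le_ciSup hbdd n
  have hM0 : 0 ≤ M := le_trans (norm_nonneg _) (hMn ⟨0, hN⟩)
  have hA0 : 0 ≤ A := norm_nonneg _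
  -- convex-combination bound
  have hcomb : ∀ τ, ‖(∑ n, ω n (y τ) τ • x0 n) - z‖ ≤ M := by
    intro τ
    have h1 : (∑ n, ω n (y τ) τ • x0 n) - z = ∑ n, ω n (y τ) τ • (x0 n - z) := by
      simp only [smul_sub, Finset.sum_sub_distrib, ← Finset.sum_smul, hω1, one_smul]
    rw [h1]
    calc ‖∑ n, ω n (y τ) τ • (x0 n - z)‖ ≤ ∑ n, ‖ω n (y τ) τ • (x0 n - z)‖ :=
          norm_sum_le _ _
      _ ≤ ∑ n, ω n (y τ) τ * M := by
          refine Finset.sum_le_sum fun n _ => ?_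
          rw [norm_smul, Real.norm_eq_abs, abs_of_nonneg (hω0 n _ _)]
          exact mul_le_mul_of_nonneg_left (hMn n) (hω0 n _ _)
      _ = M := by rw [← Finset.sum_mul, hω1, one_mul]
  -- key exponential bound
  have key : ∀ s ≥ s0, exp s * ‖y s - z‖ ≤ exp s0 * (A - M) + exp s * M := by
    intro s hs
    set f : ℝ → H := fun τ => exp τ • (y τ - z) with hf
    set f' : ℝ → H := fun τ => exp τ • ((∑ n, ω n (y τ) τ • x0 n) - z) with hf'
    have hder : ∀ τ ≥ s0, HasDerivAt f (f' τ) τ := by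
      intro τ hτ
      have h1 := (Real.hasDerivAt_exp τ).smul (((hode τ hτ).sub_const z))
      convert h1 using 1
      · rfl
      simp only [hf']
      module
    have hcont : ContinuousOn f (Icc s0 s) := fun τ hτ =>
      ((hder τ hτ.1).continuousAt).continuousWithinAt
    have hB : ∀ τ, HasDerivAt (fun τ => exp s0 * (A - M) + exp τ * M) (exp τ * M) τ :=
      fun τ => ((Real.hasDerivAt_exp τ).mul_const M).const_add _
    have ha : ‖f s0‖ ≤ exp s0 * (A - M) + exp s0 * M := by
      simp only [hf, norm_smul, Real.norm_eq_abs, abs_exp, hy0, ← hAdef]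
      ring_nf
      nlinarith [Real.exp_pos s0]
    have bound : ∀ τ ∈ Ico s0 s, ‖f' τ‖ ≤ exp τ * M := by
      intro τ hτ
      simp only [hf', norm_smul, Real.norm_eq_abs, abs_exp]
      exact mul_le_mul_of_nonneg_left (hcomb τ) (Real.exp_pos τ).le
    have := image_norm_le_of_norm_deriv_right_le_deriv_boundary hcont
      (fun τ hτ => (hder τ hτ.1).hasDerivWithinAt) ha hB bound
      (Set.right_mem_Icc.mpr hs)
    simpa [hf, norm_smul, Real.norm_eq_abs, abs_exp] using this
  have hbnd : ∀ s ≥ s0, ‖y s - z‖ ≤ exp (s0 - s) * (A - M) + M := by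
    intro s hs
    have h := key s hs
    have he : 0 < exp s := Real.exp_pos s
    have : exp (s0 - s) = exp s0 / exp s := by rw [Real.exp_sub]
    rw [this]
    rw [div_mul_eq_mul_div, ← sub_le_iff_le_add, le_div_iff₀ he]
    nlinarith
  constructor
  · intro s hs
    have h := hbnd s hs
    have he1 : exp (s0 - s) ≤ 1 := Real.exp_le_one_iff.mpr (by linarith)
    have he0 : 0 < exp (s0 - s) := Real.exp_pos _
    rcases le_total A M with hAM | hAM
    · refine h.trans (le_max_of_le_right ?_)
      nlinarith
    · refine h.trans (le_max_of_le_left ?_)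
      nlinarith
  · have hev : ∀ᶠ s in atTop, ‖y s - z‖ ≤ exp (s0 - s) * |A - M| + M := by
      filter_upwards [eventually_ge_atTop s0] with s hs
      refine (hbnd s hs).trans ?_
      have := le_abs_self (A - M)
      have he0 : 0 < exp (s0 - s) := Real.exp_pos _
      nlinarith
    have htend : Tendsto (fun s => exp (s0 - s) * |A - M| + M) atTop (nhds (0 * |A - M| + M)) := by
      refine Tendsto.add (Tendsto.mul_const _ ?_) tendsto_const_nhds
      have : Tendsto (fun s : ℝ => s0 - s) atTop atBot := by
        simpa [sub_eq_add_neg] using tendsto_atBot_add_const_left atTop s0 tendsto_neg_atTop_atBot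
      exact Real.tendsto_exp_atBot.comp this
    rw [zero_mul, zero_add] at htend
    calc Filter.limsup (fun s => ‖y s - z‖) atTop
        ≤ Filter.limsup (fun s => exp (s0 - s) * |A - M| + M) atTop := by
          refine limsup_le_limsup hev ?_ ?_
          · exact IsCoboundedUnder.of_frequently_ge (Frequently.of_forall fun s => norm_nonneg _)
          · exact htend.isBoundedUnder_le
      _ = M := htend.limsup_eq
end

section
/- Let x₀¹,…,x₀ᴺ ∈ ℝᵈ be distinct with minimum pairwise distance D₋, maximum pairwise distance D⁺, and |x|_∞ = maxₙ|x₀ⁿ|. Fix n, δ ∈ (0,D₋), r > |x|_∞, and suppose s ≥ s_D where 1 − √(1 − e^{−2s_D}) < δ²/(8D⁺r). Then for y ∈ V_δ(x₀ⁿ) ∩ B(0,r) and ℓ ≠ n, writing m(s) = √(1 − e^{−2s}), one has |y − m(s)x₀ⁿ|² − |y − m(s)x₀ˡ|² ≤ −δ²/2, and hence the normalized Gaussian weight ω_ℓ(y,s) = exp(−e^{2s}|y − m(s)x₀ˡ|²/2)/Σₘ exp(−e^{2s}|y − m(s)x₀ᵐ|²/2) satisfies ω_ℓ(y,s) < exp(−e^{2s}δ²/4).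 -/
set_option maxHeartbeats 1000000 in
theorem stmt18 {d N : ℕ} (x0 : Fin N → EuclideanSpace ℝ (Fin d))
    (Dm Dp r : ℝ)
    (hsep : ∀ i j, i ≠ j → Dm ≤ ‖x0 i - x0 j‖)
    (hDp : ∀ i j, ‖x0 i - x0 j‖ ≤ Dp) (hDp0 : 0 < Dp)
    (hr : ∀ i, ‖x0 i‖ < r)
    (n : Fin N) (δ : ℝ) (hδ : 0 < δ) (hδD : δ < Dm)
    (sD s : ℝ)
    (hsD : 1 - Real.sqrt (1 - Real.exp (-(2*sD))) < δ^2 / (8 * Dp * r))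
    (hs : sD ≤ s)
    (y : EuclideanSpace ℝ (Fin d)) (hyr : ‖y‖ < r)
    (hy : ∀ ℓ, ℓ ≠ n → ‖y - x0 n‖^2 < ‖y - x0 ℓ‖^2 - δ^2) :
    let ms := Real.sqrt (1 - Real.exp (-(2*s)))
    let wt : Fin N → ℝ := fun ℓ =>
      Real.exp (-(Real.exp (2*s)) * ‖y - ms • x0 ℓ‖^2 / 2)
    ∀ ℓ, ℓ ≠ n →
      ‖y - ms • x0 n‖^2 - ‖y - ms • x0 ℓ‖^2 ≤ -δ^2/2 ∧
      wt ℓ / (∑ m, wt m) < Real.exp (-(Real.exp (2*s)) * δ^2 / 4) := by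
  intro ms wt ℓ hℓ
  have hr0 : 0 < r := lt_of_le_of_lt (norm_nonneg (x0 n)) (hr n)
  have hnℓ : n ≠ ℓ := fun h => hℓ h.symm
  have hab : ‖x0 n - x0 ℓ‖ ≤ Dp := hDp n ℓ
  have hDmab : Dm ≤ ‖x0 n - x0 ℓ‖ := hsep n ℓ hnℓ
  have hab2r : ‖x0 n - x0 ℓ‖ < 2 * r :=
    lt_of_le_of_lt (norm_sub_le _ _) (by linarith [hr n, hr ℓ])
  have hms0 : 0 ≤ ms := Real.sqrt_nonneg _
  have hms1 : ms ≤ 1 := Real.sqrt_le_one.2 (by linarith [Real.exp_nonneg (-(2*s))])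
  have h8 : (0:ℝ) < 8 * Dp * r := by positivity
  have hmono : Real.sqrt (1 - Real.exp (-(2*sD))) ≤ ms :=
    Real.sqrt_le_sqrt (by
      have : Real.exp (-(2*s)) ≤ Real.exp (-(2*sD)) :=
        Real.exp_le_exp.mpr (by linarith)
      linarith)
  have h1m : 1 - ms < δ^2 / (8 * Dp * r) := by linarith
  have hu8 : (1 - ms) * (8 * Dp * r) < δ^2 := (lt_div_iff₀ h8).mp h1m
  have hq : δ^2 < 2 * r * Dp := by nlinarith
  have hms34 : (3:ℝ)/4 < ms := by
    have : δ^2 / (8 * Dp * r) < 1/4 := by rw [div_lt_iff₀ h8]; nlinarith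
    linarith
  -- bounds on ‖a‖² - ‖b‖²
  have habs := abs_norm_sub_norm_le (x0 n) (x0 ℓ)
  have habs' : |‖x0 n‖ - ‖x0 ℓ‖| ≤ Dp := le_trans habs hab
  obtain ⟨hlo, hhi⟩ := abs_le.mp habs'
  have hXhi : ‖x0 n‖^2 - ‖x0 ℓ‖^2 ≤ 2 * r * Dp := by
    nlinarith [norm_nonneg (x0 n), norm_nonneg (x0 ℓ), hr n, hr ℓ]
  have hXlo : -(2 * r * Dp) ≤ ‖x0 n‖^2 - ‖x0 ℓ‖^2 := by
    nlinarith [norm_nonneg (x0 n), norm_nonneg (x0 ℓ), hr n, hr ℓ]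
  -- key identity
  have expand : ∀ z : EuclideanSpace ℝ (Fin d),
      ‖y - ms • z‖^2 = ‖y‖^2 - 2*ms*(inner ℝ y z : ℝ) + ms^2*‖z‖^2 := by
    intro z
    rw [norm_sub_sq_real, real_inner_smul_right, norm_smul, Real.norm_eq_abs,
      abs_of_nonneg hms0, mul_pow]
    ring
  have expand1 : ∀ z : EuclideanSpace ℝ (Fin d),
      ‖y - z‖^2 = ‖y‖^2 - 2*(inner ℝ y z : ℝ) + ‖z‖^2 := by
    intro z; rw [norm_sub_sq_real]
  have key : ‖y - ms • x0 n‖^2 - ‖y - ms • x0 ℓ‖^2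
      = ms * (‖y - x0 n‖^2 - ‖y - x0 ℓ‖^2)
        + ms * (ms - 1) * (‖x0 n‖^2 - ‖x0 ℓ‖^2) := by
    rw [expand (x0 n), expand (x0 ℓ), expand1 (x0 n), expand1 (x0 ℓ)]
    ring
  have hD1 : ‖y - x0 n‖^2 - ‖y - x0 ℓ‖^2 < -δ^2 := by
    have := hy ℓ hℓ; linarith
  have hpart1 : ‖y - ms • x0 n‖^2 - ‖y - ms • x0 ℓ‖^2 ≤ -δ^2/2 := by
    rw [key]
    have hE1 : ms * (‖y - x0 n‖^2 - ‖y - x0 ℓ‖^2) ≤ (3/4) * (-δ^2) := by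
      linarith [mul_nonpos_of_nonneg_of_nonpos
        (show (0:ℝ) ≤ ms - 3/4 by linarith)
        (show ‖y - x0 n‖^2 - ‖y - x0 ℓ‖^2 ≤ 0 by linarith [hD1, sq_nonneg δ]), hD1]
    have hu0 : (0:ℝ) ≤ 1 - ms := by linarith
    have t1 : ms * (ms - 1) * (‖x0 n‖^2 - ‖x0 ℓ‖^2) ≤ ms * (1 - ms) * (2*r*Dp) := by
      nlinarith [mul_nonneg (mul_nonneg hms0 hu0)
        (show (0:ℝ) ≤ 2*r*Dp + (‖x0 n‖^2 - ‖x0 ℓ‖^2) by linarith)]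
    have t2 : ms * (1 - ms) * (2*r*Dp) ≤ (1 - ms) * (2*r*Dp) := by
      nlinarith [mul_nonneg (mul_nonneg hu0 hu0) (show (0:ℝ) ≤ 2*r*Dp by positivity)]
    have t3 : (1 - ms) * (2*r*Dp) ≤ δ^2/4 := by nlinarith [hu8]
    have hE2 : ms * (ms - 1) * (‖x0 n‖^2 - ‖x0 ℓ‖^2) ≤ δ^2/4 := by linarith
    linarith
  refine ⟨hpart1, ?_⟩
  have hwt : ∀ m, wt m = Real.exp (-(Real.exp (2*s)) * ‖y - ms • x0 m‖^2 / 2) :=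
    fun m => rfl
  have hwpos : ∀ m, 0 < wt m := fun m => by rw [hwt]; exact Real.exp_pos _
  have hsum : wt n + wt ℓ ≤ ∑ m, wt m := by
    have h := Finset.sum_le_sum_of_subset_of_nonneg
      (Finset.subset_univ ({n, ℓ} : Finset (Fin N))) (fun i _ _ => (hwpos i).le)
    rwa [Finset.sum_pair hnℓ] at h
  have hlt : wt ℓ / (∑ m, wt m) < wt ℓ / wt n :=
    div_lt_div_of_pos_left (hwpos ℓ) (hwpos n) (by linarith [hwpos ℓ])
  have heq : wt ℓ / wt n ≤ Real.exp (-(Real.exp (2*s)) * δ^2 / 4) := by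
    rw [hwt, hwt, ← Real.exp_sub]
    apply Real.exp_le_exp.mpr
    nlinarith [mul_le_mul_of_nonneg_left hpart1
      (show (0:ℝ) ≤ Real.exp (2*s) / 2 by positivity)]
  linarith
end
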